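/- Let f : V → W be a linear map of finite-dimensional real inner product spaces and let λ ≥ 0. Then F(f)(λ) = F(f*)(λ) + dim V − dim W, where F denotes the spectral density function. In particular F(f)(λ) − F(f)(0) = F(f*)(λ) − F(f*)(0). -/

import Mathlib

open scoped RealInnerProductSpace

variable {V E : Type*}

noncomputable def c1 [Fintype E] [DecidableEq V] (v0 v1 : E → V) :
    EuclideanSpace ℝ E →ₗ[ℝ] EuclideanSpace ℝ V where
  toFun a := WithLp.toLp 2 (fun v =>
    (∑ e ∈ Finset.univ.filter (fun e => v1 e = v), a e)
      - (∑ e ∈ Finset.univ.filter (fun e => v0 e = v), a e))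
  map_add' a b := by
    ext v
    simp [PiLp.add_apply, Finset.sum_add_distrib] <;> ring
  map_smul' c a := by
    ext v
    simp [PiLp.smul_apply, smul_eq_mul, ← Finset.mul_sum, mul_sub]

/-- Spectral density function of a linear map of inner product spaces. -/
noncomputable def sdf {V W : Type*} [NormedAddCommGroup V] [InnerProductSpace ℝ V]
    [NormedAddCommGroup W] [InnerProductSpace ℝ W]
    (f : V →ₗ[ℝ] W) (lam : ℝ) : ℕ :=
  sSup {n : ℕ | ∃ U : Submodule ℝ V, Module.finrank ℝ U = n ∧ ∀ v ∈ U, ‖f v‖ ≤ lam * ‖v‖}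

/-- Degree of a vertex in a finite directed multigraph (loops count twice). -/
def vdeg [Fintype E] [DecidableEq V] (v0 v1 : E → V) (v : V) : ℕ :=
  (Finset.univ.filter fun e => v0 e = v).card + (Finset.univ.filter fun e => v1 e = v).card

/-- Maximal vertex degree of a finite multigraph. -/
def maxDeg [Fintype V] [Fintype E] [DecidableEq V] (v0 v1 : E → V) : ℕ :=
  Finset.univ.sup (vdeg v0 v1)

/-- The simple graph underlying a directed multigraph. -/
def supportGraph (v0 v1 : E → V) : SimpleGraph V where
  Adj u w := u ≠ w ∧ ∃ e, (v0 e = u ∧ v1 e = w) ∨ (v0 e = w ∧ v1 e = u)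
  symm := ⟨by
    rintro u w ⟨h, e, he⟩
    exact ⟨h.symm, e, he.symm⟩⟩
  loopless := ⟨by rintro u ⟨h, _⟩; exact h rfl⟩

lemma sdf_bddAbove {V W : Type*} [NormedAddCommGroup V] [InnerProductSpace ℝ V]
    [FiniteDimensional ℝ V] [NormedAddCommGroup W] [InnerProductSpace ℝ W]
    (f : V →ₗ[ℝ] W) (lam : ℝ) :
    BddAbove {n : ℕ | ∃ U : Submodule ℝ V, Module.finrank ℝ U = n ∧
      ∀ v ∈ U, ‖f v‖ ≤ lam * ‖v‖} :=
  ⟨Module.finrank ℝ V, fun _ ⟨U, hU, _⟩ => hU ▸ Submodule.finrank_le U⟩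

lemma sdf_set_nonempty {V W : Type*} [NormedAddCommGroup V] [InnerProductSpace ℝ V]
    [NormedAddCommGroup W] [InnerProductSpace ℝ W]
    (f : V →ₗ[ℝ] W) (lam : ℝ) :
    Set.Nonempty {n : ℕ | ∃ U : Submodule ℝ V, Module.finrank ℝ U = n ∧
      ∀ v ∈ U, ‖f v‖ ≤ lam * ‖v‖} :=
  ⟨0, ⊥, finrank_bot ℝ V, fun v hv => by
    rw [Submodule.mem_bot] at hv; simp [hv]⟩

lemma sdf_key {V W : Type*} [NormedAddCommGroup V] [InnerProductSpace ℝ V]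
    [FiniteDimensional ℝ V] [NormedAddCommGroup W] [InnerProductSpace ℝ W]
    [FiniteDimensional ℝ W] (f : V →ₗ[ℝ] W) (lam : ℝ) (hlam : 0 ≤ lam) :
    sdf f lam + Module.finrank ℝ W ≤ sdf (LinearMap.adjoint f) lam + Module.finrank ℝ V := by
  obtain ⟨U, hU, hprop⟩ :=
    Nat.sSup_mem (sdf_set_nonempty f lam) (sdf_bddAbove f lam)
  have hU2 : Module.finrank ℝ U = sdf f lam := hU
  set K : Submodule ℝ W := Submodule.map f Uᗮ with hK
  set U' : Submodule ℝ W := Kᗮ with hU'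
  -- the adjoint maps U' into U
  have hadj : ∀ w ∈ U', LinearMap.adjoint f w ∈ U := by
    intro w hw
    rw [← Submodule.orthogonal_orthogonal U]
    intro u hu
    have hfu : f u ∈ K := Submodule.mem_map_of_mem hu
    have h0 : ⟪f u, w⟫ = 0 := (Submodule.mem_orthogonal K w).mp hw (f u) hfu
    calc ⟪u, LinearMap.adjoint f w⟫ = ⟪LinearMap.adjoint f w, u⟫ := real_inner_comm _ _
      _ = ⟪w, f u⟫ := LinearMap.adjoint_inner_left f u w
      _ = 0 := by rw [real_inner_comm]; exact h0
  -- the norm bound on U'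
  have hmem : ∀ w ∈ U', ‖LinearMap.adjoint f w‖ ≤ lam * ‖w‖ := by
    intro w hw
    set a := ‖LinearMap.adjoint f w‖ with ha
    have ha0 : 0 ≤ a := norm_nonneg _
    have hsq : a ^ 2 ≤ ‖w‖ * (lam * a) := by
      have h1 : ⟪LinearMap.adjoint f w, LinearMap.adjoint f w⟫ = ⟪w, f (LinearMap.adjoint f w)⟫ :=
        LinearMap.adjoint_inner_left f _ w
      have h2 : ⟪w, f (LinearMap.adjoint f w)⟫ ≤ ‖w‖ * ‖f (LinearMap.adjoint f w)‖ :=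
        real_inner_le_norm _ _
      have h3 : ‖f (LinearMap.adjoint f w)‖ ≤ lam * ‖LinearMap.adjoint f w‖ :=
        hprop _ (hadj w hw)
      have h4 : ⟪LinearMap.adjoint f w, LinearMap.adjoint f w⟫ = a ^ 2 := by
        rw [real_inner_self_eq_norm_sq]
      nlinarith [norm_nonneg w]
    rcases eq_or_lt_of_le ha0 with h | h
    · rw [← h]; positivity
    · nlinarith
  have h1 : Module.finrank ℝ U' ≤ sdf (LinearMap.adjoint f) lam :=
    le_csSup (sdf_bddAbove _ _) ⟨U', rfl, hmem⟩
  have h2 : Module.finrank ℝ K + Module.finrank ℝ U' = Module.finrank ℝ W :=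
    Submodule.finrank_add_finrank_orthogonal K
  have h3 : Module.finrank ℝ K ≤ Module.finrank ℝ Uᗮ := by
    rw [hK]; exact Submodule.finrank_map_le f Uᗮ
  have h4 : Module.finrank ℝ U + Module.finrank ℝ Uᗮ = Module.finrank ℝ V :=
    Submodule.finrank_add_finrank_orthogonal U
  omega

/-- F(f)(λ) = F(f*)(λ) + dim V − dim W, and in particular
F(f)(λ) − F(f)(0) = F(f*)(λ) − F(f*)(0). -/
theorem sdf_adjoint {V W : Type*} [NormedAddCommGroup V] [InnerProductSpace ℝ V]
    [FiniteDimensional ℝ V] [NormedAddCommGroup W] [InnerProductSpace ℝ W]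
    [FiniteDimensional ℝ W] (f : V →ₗ[ℝ] W) (lam : ℝ) (hlam : 0 ≤ lam) :
    (sdf f lam : ℤ) = (sdf (LinearMap.adjoint f) lam : ℤ)
        + Module.finrank ℝ V - Module.finrank ℝ W ∧
    (sdf f lam : ℤ) - (sdf f 0 : ℤ)
      = (sdf (LinearMap.adjoint f) lam : ℤ) - (sdf (LinearMap.adjoint f) 0 : ℤ) := by
  have key := sdf_key f lam hlam
  have key0 := sdf_key f 0 le_rfl
  have key' := sdf_key (LinearMap.adjoint f) lam hlam
  have key0' := sdf_key (LinearMap.adjoint f) 0 le_rfl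
  rw [LinearMap.adjoint_adjoint] at key' key0'
  constructor <;> omega
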